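/- With 𝒯ℰ = ⟨σ₁, σ₂⟩ as above (σ₁ a 4-fold twist about the z-axis with translational component (0,0,c), σ₂ a half-turn twist about the vertical line through (p,q,0) with translational component (0,0,2c)), the intersection of 𝒯ℰ with the group of all translations of ℝ³ is the lattice generated by the three vectors (0,0,4c), (2p,2q,0), and (2q,−2p,0). -/

import Mathlib

noncomputable section
open scoped RealInnerProductSpace

abbrev E3 : Type := EuclideanSpace ℝ (Fin 3)

def vec (x y z : ℝ) : E3 := (WithLp.equiv 2 (Fin 3 → ℝ)).symm ![x, y, z]

/-- The vertex set of the cubic tessellation: the integer lattice ℤ³. -/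
def latt : Set E3 := {p | ∀ i, ∃ n : ℤ, p i = (n : ℝ)}

/-- An isometry belongs to the symmetry group [4,3,4] of the cubic tessellation
iff it preserves the integer lattice. -/
def PreservesLatt (f : E3 ≃ᵢ E3) : Prop := ∀ p : E3, p ∈ latt ↔ f p ∈ latt

/-- `f` is a rotation of order `n` about the line through `p` with direction `v`:
it fixes the line pointwise and has order `n` in the isometry group. -/
def IsRotationAbout (f : E3 ≃ᵢ E3) (p v : E3) (n : ℕ) : Prop :=
  v ≠ 0 ∧ (∀ t : ℝ, f (p + t • v) = p + t • v) ∧ orderOf f = n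

/-- `f` is a twist (screw motion): the commuting product of a rotation `r` of order `n ≥ 2`
about the line through `p` in direction `v` with the translation by `w ≠ 0`, `w` parallel to `v`. -/
def IsTwist (f : E3 ≃ᵢ E3) (p v w : E3) (n : ℕ) : Prop :=
  2 ≤ n ∧ w ≠ 0 ∧ (∃ s : ℝ, w = s • v) ∧
  ∃ r : E3 ≃ᵢ E3, IsRotationAbout r p v n ∧ (∀ x, f x = r x + w) ∧ (∀ x, r (x + w) = r x + w)

/-- The 4-fold twist about the vertical line through `(p,q,0)` with translational
component `(0,0,c)`: rotation by π/2 about the line composed with translation by `(0,0,c)`. -/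
def fourTwist (p q c : ℝ) : E3 → E3 :=
  fun x => vec (p + (x 1 - q)) (q - (x 0 - p)) (x 2 + c)

/-- The half-turn twist about the vertical line through `(p,q,0)` with translational
component `(0,0,c)`. -/
def halfTwistV (p q c : ℝ) : E3 → E3 :=
  fun x => vec (2 * p - x 0) (2 * q - x 1) (x 2 + c)

/-- The translation of ℝ³ by the vector `w`, as an isometry. -/
def transl (w : E3) : E3 ≃ᵢ E3 :=
  ⟨Equiv.addRight w, Isometry.of_dist_eq fun a b => by simp⟩

/-- The group of all translations of ℝ³. -/
def TransGrp : Subgroup (E3 ≃ᵢ E3) where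
  carrier := {f | ∃ w : E3, ∀ x, f x = x + w}
  one_mem' := ⟨0, fun x => by simp⟩
  mul_mem' := by
    rintro f g ⟨w, hw⟩ ⟨u, hu⟩
    exact ⟨u + w, fun x => by
      show f (g x) = x + (u + w)
      rw [hu, hw, add_assoc]⟩
  inv_mem' := by
    rintro f ⟨w, hw⟩
    refine ⟨-w, fun x => ?_⟩
    show f.symm x = x + -w
    rw [IsometryEquiv.symm_apply_eq, hw]
    abel


@[simp] lemma vec_app0 (x y z : ℝ) : vec x y z 0 = x := rfl
@[simp] lemma vec_app1 (x y z : ℝ) : vec x y z 1 = y := rfl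
@[simp] lemma vec_app2 (x y z : ℝ) : vec x y z 2 = z := rfl
@[simp] lemma e3_add_app (a b : E3) (i : Fin 3) : (a + b) i = a i + b i := rfl
@[simp] lemma e3_neg_app (a : E3) (i : Fin 3) : (-a) i = -(a i) := rfl
@[simp] lemma e3_zero_app (i : Fin 3) : (0 : E3) i = 0 := rfl

lemma e3_ext {a b : E3} (h : ∀ i, a i = b i) : a = b := PiLp.ext h

def Rot : E3 → E3 := fun x => vec (x 1) (-(x 0)) (x 2)

lemma vec_add (a b c d e f : ℝ) : vec a b c + vec d e f = vec (a+d) (b+e) (c+f) := by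
  refine e3_ext fun i => ?_; fin_cases i <;> simp

lemma vec_zero : vec 0 0 0 = 0 := by
  refine e3_ext fun i => ?_; fin_cases i <;> simp

lemma Rot_add (a b : E3) : Rot (a + b) = Rot a + Rot b := by
  refine e3_ext fun i => ?_; fin_cases i <;> simp [Rot] <;> ring

lemma Rot_z (t : ℝ) : Rot (vec 0 0 t) = vec 0 0 t := by
  refine e3_ext fun i => ?_; fin_cases i <;> simp [Rot]

lemma Rot4 (x : E3) : Rot^[4] x = x := by
  show Rot (Rot (Rot (Rot x))) = x
  refine e3_ext fun i => ?_; fin_cases i <;> simp [Rot]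

lemma Rk_add (k : ℕ) (a b : E3) : Rot^[k] (a + b) = Rot^[k] a + Rot^[k] b := by
  induction k generalizing a b with
  | zero => rfl
  | succ n ih => simp only [Function.iterate_succ_apply, Rot_add, ih]

lemma Rk_z (k : ℕ) (t : ℝ) : Rot^[k] (vec 0 0 t) = vec 0 0 t := by
  induction k with
  | zero => rfl
  | succ n ih => simp only [Function.iterate_succ_apply, Rot_z, ih]

lemma Rk_zero (k : ℕ) : Rot^[k] 0 = 0 := by
  rw [← vec_zero, Rk_z]

lemma Rk_neg (k : ℕ) (a : E3) : Rot^[k] (-a) = -(Rot^[k] a) := by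
  have := Rk_add k a (-a)
  simp only [add_neg_cancel, Rk_zero] at this
  linear_combination (norm := abel) -this

lemma R4k (k : ℕ) (x : E3) : Rot^[4*k] x = x := by
  induction k with
  | zero => rfl
  | succ n ih =>
    have : 4*(n+1) = 4*n + 4 := by ring
    rw [this, Function.iterate_add_apply, Rot4, ih]

def Latt (p q c : ℝ) : AddSubgroup E3 :=
  AddSubgroup.closure {vec 0 0 (4*c), vec (2*p) (2*q) 0, vec (2*q) (-(2*p)) 0}

lemma Latt_rot (p q c : ℝ) {v : E3} (hv : v ∈ Latt p q c) : Rot v ∈ Latt p q c := by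
  induction hv using AddSubgroup.closure_induction with
  | mem x hx =>
    rcases hx with h | h | h
    · rw [h, Rot_z]; exact AddSubgroup.subset_closure (by left; rfl)
    · have : Rot (vec (2*p) (2*q) 0) = vec (2*q) (-(2*p)) 0 := by
        refine e3_ext fun i => ?_; fin_cases i <;> simp [Rot]
      rw [h, this]; exact AddSubgroup.subset_closure (by right; right; rfl)
    · have : Rot (vec (2*q) (-(2*p)) 0) = -(vec (2*p) (2*q) 0) := by
        refine e3_ext fun i => ?_; fin_cases i <;> simp [Rot]
      rw [h, this]
      exact neg_mem (AddSubgroup.subset_closure (by right; left; rfl))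
  | zero => rw [show Rot 0 = 0 from by rw [← vec_zero, Rot_z, vec_zero]]; exact zero_mem _
  | add x y hx hy ihx ihy => rw [Rot_add]; exact add_mem ihx ihy
  | neg x hx ihx =>
    have : Rot (-x) = -(Rot x) := Rk_neg 1 x
    rw [this]; exact neg_mem ihx

lemma Latt_rk (p q c : ℝ) (k : ℕ) {v : E3} (hv : v ∈ Latt p q c) :
    Rot^[k] v ∈ Latt p q c := by
  induction k with
  | zero => exact hv
  | succ n ih => rw [Function.iterate_succ_apply']; exact Latt_rot p q c ih

lemma Latt_z4k (p q c : ℝ) (k : ℕ) : vec 0 0 (4*(k*c)) ∈ Latt p q c := by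
  induction k with
  | zero =>
    rw [show (4:ℝ)*(((0:ℕ):ℝ)*c) = 0 by norm_num, vec_zero]; exact zero_mem _
  | succ n ih =>
    have : vec 0 0 (4*(((n:ℝ)+1)*c)) = vec 0 0 (4*((n:ℝ)*c)) + vec 0 0 (4*c) := by
      rw [vec_add]; norm_num; ring
    push_cast
    rw [this]
    exact add_mem ih (AddSubgroup.subset_closure (by left; rfl))

/-- The overgroup: all isometries of the form `x ↦ Rotᵏ x + (0,0,kc) + v` with `v` in the
lattice. -/
def SGrp (p q c : ℝ) : Subgroup (E3 ≃ᵢ E3) where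
  carrier := {f | ∃ (k : ℕ), ∃ v ∈ Latt p q c,
      ∀ x, f x = Rot^[k] x + (vec 0 0 (k*c) + v)}
  one_mem' := ⟨0, 0, zero_mem _, fun x => by simp [vec_zero]⟩
  mul_mem' := by
    rintro f g ⟨k, v, hv, hf⟩ ⟨l, u, hu, hg⟩
    refine ⟨k + l, Rot^[k] u + v, add_mem (Latt_rk p q c k hu) hv, fun x => ?_⟩
    show f (g x) = _
    rw [hg, hf, Rk_add, Rk_add, Rk_z, ← Function.iterate_add_apply]
    have : ((k + l : ℕ) : ℝ) * c = (l : ℝ) * c + (k : ℝ) * c := by push_cast; ring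
    rw [this]
    have h2 : vec 0 0 ((l:ℝ)*c + (k:ℝ)*c) = vec 0 0 ((l:ℝ)*c) + vec 0 0 ((k:ℝ)*c) := by
      rw [vec_add]; norm_num
    rw [h2]
    abel
  inv_mem' := by
    rintro f ⟨k, v, hv, hf⟩
    refine ⟨3*k, -(vec 0 0 (4*(k*c))) + -(Rot^[3*k] v),
      add_mem (neg_mem (Latt_z4k p q c k)) (neg_mem (Latt_rk p q c _ hv)), fun x => ?_⟩
    show f.symm x = _
    rw [IsometryEquiv.symm_apply_eq, hf]
    simp only [Rk_add, Rk_neg, Rk_z, ← Function.iterate_add_apply]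
    have h4 : Rot^[k + 3*k] x = x := by
      rw [show k + 3*k = 4*k by ring, R4k]
    have h4v : Rot^[k + 3*k] v = v := by
      rw [show k + 3*k = 4*k by ring, R4k]
    rw [h4, h4v]
    have : vec 0 0 ((3*k : ℕ) * c) = vec 0 0 (4*(k*c)) + -(vec 0 0 ((k:ℝ)*c)) := by
      rw [show -(vec 0 0 ((k:ℝ)*c)) = vec (-0) (-0) (-((k:ℝ)*c)) from
        e3_ext fun i => by fin_cases i <;> simp, vec_add]
      norm_num; push_cast; ring
    rw [this]
    abel

lemma transl_apply (w x : E3) : transl w x = x + w := rfl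

lemma transl_mem_closure (p q c : ℝ) {w : E3} (hw : w ∈ Latt p q c) :
    transl w ∈ Subgroup.closure ({transl (vec 0 0 (4*c)), transl (vec (2*p) (2*q) 0),
      transl (vec (2*q) (-(2*p)) 0)} : Set (E3 ≃ᵢ E3)) := by
  induction hw using AddSubgroup.closure_induction with
  | mem x hx =>
    rcases hx with h | h | h
    · rw [h]; exact Subgroup.subset_closure (by left; rfl)
    · rw [h]; exact Subgroup.subset_closure (by right; left; rfl)
    · rw [h]; exact Subgroup.subset_closure (by right; right; rfl)
  | zero =>
    rw [show transl (0:E3) = 1 from IsometryEquiv.ext fun x => by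
      rw [transl_apply, add_zero]; rfl]
    exact one_mem _
  | add x y hx hy ihx ihy =>
    rw [show transl (x + y) = transl y * transl x from IsometryEquiv.ext fun z => by
      show z + (x + y) = transl y (transl x z)
      rw [transl_apply, transl_apply]; abel]
    exact mul_mem ihy ihx
  | neg x hx ihx =>
    rw [show transl (-x) = (transl x)⁻¹ from IsometryEquiv.ext fun z => by
      show z + -x = (transl x).symm z
      rw [IsometryEquiv.eq_symm_apply, transl_apply]; abel]
    exact inv_mem ihx

/-- The intersection of 𝒯ℰ = ⟨σ₁,σ₂⟩ with the group of all translations of ℝ³ is the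
lattice generated by the translations by `(0,0,4c)`, `(2p,2q,0)` and `(2q,−2p,0)`. -/
theorem stmt15 (c : ℤ) (hc : 0 < c) (p q : ℝ) (hpq : ¬(p = 0 ∧ q = 0))
    (hp : ∃ k : ℤ, p = (k : ℝ) / 2) (hq : ∃ k : ℤ, q = (k : ℝ) / 2)
    (s1 s2 : E3 ≃ᵢ E3)
    (h1 : ∀ x, s1 x = fourTwist 0 0 (c : ℝ) x)
    (h2 : ∀ x, s2 x = halfTwistV p q (2 * (c : ℝ)) x) :
    Subgroup.closure ({s1, s2} : Set (E3 ≃ᵢ E3)) ⊓ TransGrp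
      = Subgroup.closure ({transl (vec 0 0 (4 * (c:ℝ))), transl (vec (2*p) (2*q) 0),
          transl (vec (2*q) (-(2*p)) 0)} : Set (E3 ≃ᵢ E3)) := by
  have hs1S : s1 ∈ SGrp p q (c:ℝ) := by
    refine ⟨1, 0, zero_mem _, fun x => ?_⟩
    rw [h1]
    refine e3_ext fun i => ?_
    fin_cases i <;> simp [fourTwist, Rot] <;> ring
  have hs2S : s2 ∈ SGrp p q (c:ℝ) := by
    refine ⟨2, vec (2*p) (2*q) 0,
      AddSubgroup.subset_closure (by right; left; rfl), fun x => ?_⟩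
    rw [h2]
    rw [show Rot^[2] x = Rot (Rot x) from rfl]
    refine e3_ext fun i => ?_
    fin_cases i <;> simp [halfTwistV, Rot] <;> ring
  apply le_antisymm
  · intro f hf
    rw [Subgroup.mem_inf] at hf
    have hfS : f ∈ SGrp p q (c:ℝ) :=
      (Subgroup.closure_le _).mpr (by rintro g (rfl | rfl); exacts [hs1S, hs2S]) hf.1
    obtain ⟨k, v, hv, hfk⟩ := hfS
    obtain ⟨w, hw⟩ := hf.2
    have key : ∀ x : E3, x + w = Rot^[k] x + (vec 0 0 (k*(c:ℝ)) + v) := fun x => by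
      rw [← hw, hfk]
    have hw0 : w = vec 0 0 (k*(c:ℝ)) + v := by
      have h := key 0
      rwa [Rk_zero, zero_add, zero_add] at h
    have hrot : Rot^[k] (vec 1 0 0) = vec 1 0 0 := by
      have h := key (vec 1 0 0)
      rw [hw0] at h
      exact (add_right_cancel h).symm
    have hk4' : Rot^[k % 4] (vec 1 0 0) = vec 1 0 0 := by
      have h := hrot
      rw [← Nat.mod_add_div k 4, Function.iterate_add_apply, R4k] at h
      exact h
    have hmod : k % 4 = 0 := by
      rcases (show k%4 = 0 ∨ k%4 = 1 ∨ k%4 = 2 ∨ k%4 = 3 by omega) with h|h|h|h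
      · exact h
      · exfalso; rw [h] at hk4'
        have h' : (Rot^[1] (vec 1 0 0)) 0 = (vec 1 0 0) 0 := by rw [hk4']
        norm_num [Rot] at h'
      · exfalso; rw [h] at hk4'
        rw [show Rot^[2] (vec 1 0 0) = Rot (Rot (vec 1 0 0)) from rfl] at hk4'
        have h' : (Rot (Rot (vec 1 0 0))) 0 = (vec 1 0 0) 0 := by rw [hk4']
        norm_num [Rot] at h'
      · exfalso; rw [h] at hk4'
        rw [show Rot^[3] (vec 1 0 0) = Rot (Rot (Rot (vec 1 0 0))) from rfl] at hk4'
        have h' : (Rot (Rot (Rot (vec 1 0 0)))) 1 = (vec 1 0 0) 1 := by rw [hk4']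
        norm_num [Rot] at h'
    have hdvd : vec 0 0 ((k:ℝ)*(c:ℝ)) ∈ Latt p q (c:ℝ) := by
      have hk' : k = 4*(k/4) := by omega
      have hcast : (k:ℝ) * (c:ℝ) = 4 * (((k/4 : ℕ):ℝ) * (c:ℝ)) := by
        conv_lhs => rw [hk']
        push_cast; ring
      rw [hcast]
      exact Latt_z4k p q (c:ℝ) (k/4)
    have hwL : w ∈ Latt p q (c:ℝ) := hw0 ▸ add_mem hdvd hv
    have hfw : f = transl w := IsometryEquiv.ext fun x => by rw [hw x]; rfl
    rw [hfw]
    exact transl_mem_closure p q (c:ℝ) hwL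
  · refine (Subgroup.closure_le _).mpr ?_
    have hs1 : s1 ∈ Subgroup.closure ({s1, s2} : Set (E3 ≃ᵢ E3)) :=
      Subgroup.subset_closure (by left; rfl)
    have hs2 : s2 ∈ Subgroup.closure ({s1, s2} : Set (E3 ≃ᵢ E3)) :=
      Subgroup.subset_closure (by right; rfl)
    have hinv : ∀ x, s1⁻¹ x = vec (-(x 1)) (x 0) (x 2 - c) := fun x => by
      show s1.symm x = _
      rw [IsometryEquiv.symm_apply_eq, h1]
      refine e3_ext fun i => ?_
      fin_cases i <;> simp [fourTwist] <;> ring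
    rintro g (rfl | rfl | rfl)
    · rw [SetLike.mem_coe, Subgroup.mem_inf]
      constructor
      · rw [show transl (vec 0 0 (4*(c:ℝ))) = s1 * s1 * s1 * s1 from
          IsometryEquiv.ext fun x => by
            show x + vec 0 0 (4*(c:ℝ)) = s1 (s1 (s1 (s1 x)))
            rw [h1, h1, h1, h1]
            refine e3_ext fun i => ?_
            fin_cases i <;> simp [fourTwist] <;> ring]
        exact mul_mem (mul_mem (mul_mem hs1 hs1) hs1) hs1
      · exact ⟨_, fun x => rfl⟩
    · rw [SetLike.mem_coe, Subgroup.mem_inf]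
      constructor
      · rw [show transl (vec (2*p) (2*q) 0) = s2 * s1⁻¹ * s1⁻¹ from
          IsometryEquiv.ext fun x => by
            show x + vec (2*p) (2*q) 0 = s2 (s1⁻¹ (s1⁻¹ x))
            rw [hinv, hinv, h2]
            refine e3_ext fun i => ?_
            fin_cases i <;> simp [halfTwistV] <;> ring]
        exact mul_mem (mul_mem hs2 (inv_mem hs1)) (inv_mem hs1)
      · exact ⟨_, fun x => rfl⟩
    · rw [SetLike.mem_coe, Subgroup.mem_inf]
      constructor
      · rw [show transl (vec (2*q) (-(2*p)) 0) = s1 * s2 * s1⁻¹ * s1⁻¹ * s1⁻¹ from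
          IsometryEquiv.ext fun x => by
            show x + vec (2*q) (-(2*p)) 0 = s1 (s2 (s1⁻¹ (s1⁻¹ (s1⁻¹ x))))
            rw [hinv, hinv, hinv, h2, h1]
            refine e3_ext fun i => ?_
            fin_cases i <;> simp [fourTwist, halfTwistV] <;> ring]
        exact mul_mem (mul_mem (mul_mem (mul_mem hs1 hs2) (inv_mem hs1)) (inv_mem hs1))
          (inv_mem hs1)
      · exact ⟨_, fun x => rfl⟩
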